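/- Let g = 3 and let F : 𝔽^6 → 𝔽^6 be the σ-semilinear map with F(e_1) = e_6, F(e_2) = e_1, F(e_3) = e_5, F(e_4) = F(e_5) = F(e_6) = 0, and V : 𝔽^6 → 𝔽^6 the σ⁻¹-semilinear map with V(e_1) = 0, V(e_2) = −e_6, V(e_3) = −e_4, V(e_4) = e_5, V(e_5) = V(e_6) = 0. Then a chain of subspaces 0 = W_0 ⊂ W_1 ⊂ W_2 ⊂ W_3 of 𝔽^6 with dim W_j = j is a symplectic flag stable under F and V if and only if one of the following holds: (X) W_2 = span(e_5, e_6) and W_3 ⊆ span(e_1, e_4, e_5, e_6); (Y₁) W_1 = 𝔽·e_5 and W_3 = span(e_4, e_5, e_6); (Y₂) W_1 = 𝔽·e_6 and W_3 = span(e_1, e_5, e_6); (Z₁) W_1 = 𝔽·e_6, W_2 = span(e_1, e_6) and W_3 ⊆ span(e_1, e_2, e_5, e_6); (Z₂) W_1 = 𝔽·e_5, W_2 = span(e_4, e_5) and W_3 ⊆ span(e_3, e_4, e_5, e_6). -/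

import Mathlib

section Aux
variable {𝔽 : Type*} [Field 𝔽]

/-- The coordinate subspace of `𝔽^6` supported on `s`. -/
def Kspace (𝔽 : Type*) [Field 𝔽] (s : Finset (Fin 6)) : Submodule 𝔽 (Fin 6 → 𝔽) where
  carrier := {x | ∀ j ∉ s, x j = 0}
  add_mem' := fun {a b} ha hb j hj => by simp [ha j hj, hb j hj]
  zero_mem' := fun j _ => rfl
  smul_mem' := fun c x hx j hj => by simp [hx j hj]

lemma mem_Kspace {s : Finset (Fin 6)} {x : Fin 6 → 𝔽} :
    x ∈ Kspace 𝔽 s ↔ ∀ j ∉ s, x j = 0 := Iff.rfl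

lemma single_mem_Kspace {s : Finset (Fin 6)} {i : Fin 6} (hi : i ∈ s) :
    (Pi.single i 1 : Fin 6 → 𝔽) ∈ Kspace 𝔽 s :=
  fun j hj => Pi.single_eq_of_ne (fun h : j = i => hj (h ▸ hi)) 1

lemma sum_single_eq {s : Finset (Fin 6)} {x : Fin 6 → 𝔽} (hx : ∀ j ∉ s, x j = 0) :
    (∑ i ∈ s, x i • (Pi.single i 1 : Fin 6 → 𝔽)) = x := by
  funext j
  rw [Finset.sum_apply]
  have h1 : ∀ i ∈ s, (x i • (Pi.single i 1 : Fin 6 → 𝔽)) j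
      = if j = i then x i else 0 := by
    intro i _
    simp [Pi.single_apply, mul_ite]
  rw [Finset.sum_congr rfl h1, Finset.sum_ite_eq]
  by_cases hj : j ∈ s
  · simp [hj]
  · simp [hj, hx j hj]

lemma Kspace_eq_span (s : Finset (Fin 6)) :
    Kspace 𝔽 s = Submodule.span 𝔽 ((fun i => (Pi.single i 1 : Fin 6 → 𝔽)) '' ↑s) := by
  apply le_antisymm
  · intro x hx
    rw [← sum_single_eq (mem_Kspace.mp hx)]
    exact Submodule.sum_mem _ fun i hi => Submodule.smul_mem _ _
      (Submodule.subset_span ⟨i, by simpa using hi, rfl⟩)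
  · rw [Submodule.span_le]
    rintro _ ⟨i, hi, rfl⟩
    exact single_mem_Kspace (by simpa using hi)

noncomputable def KspaceEquiv (s : Finset (Fin 6)) :
    (Kspace 𝔽 s) ≃ₗ[𝔽] ({ x // x ∈ s } → 𝔽) where
  toFun x i := x.1 i
  map_add' x y := rfl
  map_smul' c x := rfl
  invFun f := ⟨fun j => if h : j ∈ s then f ⟨j, h⟩ else 0, by
    intro j hj; simp [hj]⟩
  left_inv x := by
    ext j
    by_cases h : j ∈ s
    · simp [h]
    · simp [h, (mem_Kspace.mp x.2 j h).symm]
  right_inv f := by ext ⟨i, hi⟩; simp [hi]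

lemma finrank_Kspace (s : Finset (Fin 6)) :
    Module.finrank 𝔽 (Kspace 𝔽 s) = s.card := by
  rw [(KspaceEquiv s).finrank_eq, Module.finrank_pi, Fintype.card_coe]

end Aux
set_option maxHeartbeats 4000000 in
/-- case `g = 3`, `w = s₂₃`. `𝔽^6` carries the standard basis
`e 0, …, e 5` (`e_i = e (i-1)` in the paper's `1`-based numbering) and the standard
alternating form. `F` is the `σ`-semilinear map with `F e₁ = e₆`, `F e₂ = e₁`,
`F e₃ = e₅`, `F e₄ = F e₅ = F e₆ = 0`, and `V` the `σ⁻¹`-semilinear map with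
`V e₁ = 0`, `V e₂ = -e₆`, `V e₃ = -e₄`, `V e₄ = e₅`, `V e₅ = V e₆ = 0`. A chain
`0 = W₀ ⊂ W₁ ⊂ W₂ ⊂ W₃` with `dim W_j = j` is a symplectic flag stable under `F` and
`V` iff one of the cases (X), (Y₁), (Y₂), (Z₁), (Z₂) below holds. -/
theorem stmt15 {p : ℕ} (hp : p.Prime) {𝔽 : Type*} [Field 𝔽] [IsAlgClosed 𝔽] [CharP 𝔽 p]
    (e : Fin 6 → Fin 6 → 𝔽) (he : ∀ i, e i = Pi.single i 1)
    (B : (Fin 6 → 𝔽) → (Fin 6 → 𝔽) → 𝔽)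
    (hB : ∀ x y, B x y = x 0 * y 3 - x 3 * y 0 + (x 1 * y 4 - x 4 * y 1)
      + (x 2 * y 5 - x 5 * y 2))
    (F V : (Fin 6 → 𝔽) → (Fin 6 → 𝔽))
    (hFadd : ∀ x y, F (x + y) = F x + F y)
    (hVadd : ∀ x y, V (x + y) = V x + V y)
    (hFsmul : ∀ (c : 𝔽) x, F (c • x) = c ^ p • F x)
    (hVsmul : ∀ (c : 𝔽) x, V (c ^ p • x) = c • V x)
    (hF0 : F (e 0) = e 5) (hF1 : F (e 1) = e 0) (hF2 : F (e 2) = e 4)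
    (hF3 : F (e 3) = 0) (hF4 : F (e 4) = 0) (hF5 : F (e 5) = 0)
    (hV0 : V (e 0) = 0) (hV1 : V (e 1) = -e 5) (hV2 : V (e 2) = -e 3)
    (hV3 : V (e 3) = e 4) (hV4 : V (e 4) = 0) (hV5 : V (e 5) = 0)
    (W1 W2 W3 : Submodule 𝔽 (Fin 6 → 𝔽)) (hW12 : W1 ≤ W2) (hW23 : W2 ≤ W3)
    (hd1 : Module.finrank 𝔽 W1 = 1) (hd2 : Module.finrank 𝔽 W2 = 2)
    (hd3 : Module.finrank 𝔽 W3 = 3) :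
    ((∀ x ∈ W3, ∀ y ∈ W3, B x y = 0) ∧
      (∀ x ∈ W1, F x ∈ W1 ∧ V x ∈ W1) ∧ (∀ x ∈ W2, F x ∈ W2 ∧ V x ∈ W2) ∧
      (∀ x ∈ W3, F x ∈ W3 ∧ V x ∈ W3)) ↔
    ((W2 = Submodule.span 𝔽 {e 4, e 5} ∧
        W3 ≤ Submodule.span 𝔽 {e 0, e 3, e 4, e 5}) ∨
      (W1 = Submodule.span 𝔽 {e 4} ∧ W3 = Submodule.span 𝔽 {e 3, e 4, e 5}) ∨
      (W1 = Submodule.span 𝔽 {e 5} ∧ W3 = Submodule.span 𝔽 {e 0, e 4, e 5}) ∨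
      (W1 = Submodule.span 𝔽 {e 5} ∧ W2 = Submodule.span 𝔽 {e 0, e 5} ∧
        W3 ≤ Submodule.span 𝔽 {e 0, e 1, e 4, e 5}) ∨
      (W1 = Submodule.span 𝔽 {e 4} ∧ W2 = Submodule.span 𝔽 {e 3, e 4} ∧
        W3 ≤ Submodule.span 𝔽 {e 2, e 3, e 4, e 5})) := by

  classical
  -- p-th roots
  have hr' : ∀ c : 𝔽, ∃ d : 𝔽, d ^ p = c := fun c => IsAlgClosed.exists_pow_nat_eq c hp.pos
  choose r hrp using hr'
  have hr0 : r 0 = 0 := by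
    have h := hrp 0
    exact pow_eq_zero_iff hp.ne_zero |>.mp h
  have hrne : ∀ c : 𝔽, c ≠ 0 → r c ≠ 0 := by
    intro c hc h0
    exact hc (by rw [← hrp c, h0, zero_pow hp.ne_zero])
  have hVs : ∀ (c : 𝔽) (x : Fin 6 → 𝔽), V (c • x) = r c • V x := by
    intro c x
    conv_lhs => rw [← hrp c]
    exact hVsmul (r c) x
  -- decomposition of a vector into standard coordinates
  have hdecomp : ∀ x : Fin 6 → 𝔽,
      x = x 0 • e 0 + x 1 • e 1 + x 2 • e 2 + x 3 • e 3 + x 4 • e 4 + x 5 • e 5 := by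
    intro x
    funext j
    fin_cases j <;> simp [he, Pi.single_apply]
  -- formulas for F and V
  have hF : ∀ x : Fin 6 → 𝔽,
      F x = x 1 ^ p • e 0 + x 2 ^ p • e 4 + x 0 ^ p • e 5 := by
    intro x
    conv_lhs => rw [hdecomp x]
    rw [hFadd, hFadd, hFadd, hFadd, hFadd, hFsmul, hFsmul, hFsmul, hFsmul, hFsmul, hFsmul,
      hF0, hF1, hF2, hF3, hF4, hF5]
    module
  have hV : ∀ x : Fin 6 → 𝔽,
      V x = (-(r (x 2))) • e 3 + r (x 3) • e 4 + (-(r (x 1))) • e 5 := by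
    intro x
    conv_lhs => rw [hdecomp x]
    rw [hVadd, hVadd, hVadd, hVadd, hVadd, hVs, hVs, hVs, hVs, hVs, hVs,
      hV0, hV1, hV2, hV3, hV4, hV5]
    module
  
  -- coordinates of F x and V x
  have hFc : ∀ x : Fin 6 → 𝔽, F x 0 = x 1 ^ p ∧ F x 1 = 0 ∧ F x 2 = 0 ∧ F x 3 = 0
      ∧ F x 4 = x 2 ^ p ∧ F x 5 = x 0 ^ p := by
    intro x
    rw [hF]
    refine ⟨?_, ?_, ?_, ?_, ?_, ?_⟩ <;> simp [he, Pi.single_apply]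
  have hVc : ∀ x : Fin 6 → 𝔽, V x 0 = 0 ∧ V x 1 = 0 ∧ V x 2 = 0 ∧ V x 3 = -(r (x 2))
      ∧ V x 4 = r (x 3) ∧ V x 5 = -(r (x 1)) := by
    intro x
    rw [hV]
    refine ⟨?_, ?_, ?_, ?_, ?_, ?_⟩ <;> simp [he, Pi.single_apply]
  -- iterated maps
  have hFF : ∀ x : Fin 6 → 𝔽, F (F x) = ((x 1 ^ p) ^ p) • e 5 := by
    intro x
    rw [hF (F x), (hFc x).2.1, (hFc x).2.2.1, (hFc x).1]
    simp [zero_pow hp.ne_zero]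
  have hVV : ∀ x : Fin 6 → 𝔽, V (V x) = r (-(r (x 2))) • e 4 := by
    intro x
    rw [hV (V x), (hVc x).2.1, (hVc x).2.2.1, (hVc x).2.2.2.1, hr0]
    simp
  -- span conversions
  have hsp : ∀ s : Finset (Fin 6),
      Submodule.span 𝔽 ((fun i => (Pi.single i 1 : Fin 6 → 𝔽)) '' ↑s) = Kspace 𝔽 s :=
    fun s => (Kspace_eq_span s).symm
  have hs4 : Submodule.span 𝔽 {e 4} = Kspace 𝔽 {4} := by
    rw [← hsp]; congr 1; simp [he]
  have hs5 : Submodule.span 𝔽 {e 5} = Kspace 𝔽 {5} := by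
    rw [← hsp]; congr 1; simp [he]
  have hs45 : Submodule.span 𝔽 {e 4, e 5} = Kspace 𝔽 {4, 5} := by
    rw [← hsp]; congr 1; simp [he, Set.image_insert_eq]
  have hs05 : Submodule.span 𝔽 {e 0, e 5} = Kspace 𝔽 {0, 5} := by
    rw [← hsp]; congr 1; simp [he, Set.image_insert_eq]
  have hs34 : Submodule.span 𝔽 {e 3, e 4} = Kspace 𝔽 {3, 4} := by
    rw [← hsp]; congr 1; simp [he, Set.image_insert_eq]
  have hs045 : Submodule.span 𝔽 {e 0, e 4, e 5} = Kspace 𝔽 {0, 4, 5} := by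
    rw [← hsp]; congr 1; simp [he, Set.image_insert_eq]
  have hs345 : Submodule.span 𝔽 {e 3, e 4, e 5} = Kspace 𝔽 {3, 4, 5} := by
    rw [← hsp]; congr 1; simp [he, Set.image_insert_eq]
  have hs0345 : Submodule.span 𝔽 {e 0, e 3, e 4, e 5} = Kspace 𝔽 {0, 3, 4, 5} := by
    rw [← hsp]; congr 1; simp [he, Set.image_insert_eq]
  have hs0145 : Submodule.span 𝔽 {e 0, e 1, e 4, e 5} = Kspace 𝔽 {0, 1, 4, 5} := by
    rw [← hsp]; congr 1; simp [he, Set.image_insert_eq]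
  have hs2345 : Submodule.span 𝔽 {e 2, e 3, e 4, e 5} = Kspace 𝔽 {2, 3, 4, 5} := by
    rw [← hsp]; congr 1; simp [he, Set.image_insert_eq]
  -- helpers
  have heK : ∀ (i : Fin 6) (s : Finset (Fin 6)), i ∈ s → e i ∈ Kspace 𝔽 s := by
    intro i s hi; rw [he]; exact single_mem_Kspace hi
  have hKle : ∀ (s : Finset (Fin 6)) (W : Submodule 𝔽 (Fin 6 → 𝔽)),
      (∀ i ∈ s, e i ∈ W) → Kspace 𝔽 s ≤ W := by
    intro s W h
    rw [Kspace_eq_span, Submodule.span_le]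
    rintro _ ⟨i, hi, rfl⟩
    have := h i (by simpa using hi)
    rwa [he] at this
  have hKeq : ∀ (s : Finset (Fin 6)) (W : Submodule 𝔽 (Fin 6 → 𝔽)),
      (∀ i ∈ s, e i ∈ W) → Module.finrank 𝔽 W = s.card → Kspace 𝔽 s = W := by
    intro s W h hf
    exact Submodule.eq_of_le_of_finrank_eq (hKle s W h) (by rw [finrank_Kspace, hf])
  have hKcard : ∀ (s : Finset (Fin 6)) (W : Submodule 𝔽 (Fin 6 → 𝔽)),
      (∀ i ∈ s, e i ∈ W) → s.card ≤ Module.finrank 𝔽 W := by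
    intro s W h
    have := Submodule.finrank_mono (hKle s W h)
    rwa [finrank_Kspace] at this
  have hWle : ∀ (s : Finset (Fin 6)) (W : Submodule 𝔽 (Fin 6 → 𝔽)),
      (∀ x ∈ W, ∀ j ∉ s, x j = 0) → W ≤ Kspace 𝔽 s := fun s W h x hx => h x hx
  have hWeq : ∀ (s : Finset (Fin 6)) (W : Submodule 𝔽 (Fin 6 → 𝔽)),
      (∀ x ∈ W, ∀ j ∉ s, x j = 0) → Module.finrank 𝔽 W = s.card → W = Kspace 𝔽 s :=
    fun s W h hf => Submodule.eq_of_le_of_finrank_eq (hWle s W h)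
      (by rw [finrank_Kspace, hf])
  rw [hs4, hs5, hs45, hs05, hs34, hs045, hs345, hs0345, hs0145, hs2345]
  
  constructor
  · rintro ⟨hiso, hS1, hS2, hS3⟩
    -- x 2 vanishes on W2
    have hW2c2 : ∀ x ∈ W2, x 2 = 0 := by
      intro x hx
      by_contra hx2
      have hVx : V x ∈ W2 := (hS2 x hx).2
      have h4 : e 4 ∈ W2 := by
        have hVVx : V (V x) ∈ W2 := (hS2 _ hVx).2
        rw [hVV x] at hVVx
        exact (Submodule.smul_mem_iff _ (hrne _ (neg_ne_zero.mpr (hrne _ hx2)))).mp hVVx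
      by_cases hx1 : x 1 = 0
      · have h3 : e 3 ∈ W2 := by
          have hm : (-(r (x 2))) • e 3 ∈ W2 := by
            have he3 : (-(r (x 2))) • e 3 = V x - r (x 3) • e 4 := by
              rw [hV x, hx1, hr0]; module
            rw [he3]; exact sub_mem hVx (Submodule.smul_mem _ _ h4)
          exact (Submodule.smul_mem_iff _ (neg_ne_zero.mpr (hrne _ hx2))).mp hm
        have hEq : Kspace 𝔽 {3, 4} = W2 :=
          hKeq {3, 4} W2 (by intro i hi; fin_cases hi; exacts [h3, h4]) (by rw [hd2]; decide)
        rw [← hEq] at hx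
        exact hx2 ((mem_Kspace.mp hx) 2 (by decide))
      · have h5 : e 5 ∈ W2 := by
          have hFFx : F (F x) ∈ W2 := (hS2 _ (hS2 x hx).1).1
          rw [hFF x] at hFFx
          exact (Submodule.smul_mem_iff _ (pow_ne_zero _ (pow_ne_zero _ hx1))).mp hFFx
        have h3 : e 3 ∈ W2 := by
          have hm : (-(r (x 2))) • e 3 ∈ W2 := by
            have he3 : (-(r (x 2))) • e 3 = V x - r (x 3) • e 4 + r (x 1) • e 5 := by
              rw [hV x]; module
            rw [he3]
            exact add_mem (sub_mem hVx (Submodule.smul_mem _ _ h4)) (Submodule.smul_mem _ _ h5)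
          exact (Submodule.smul_mem_iff _ (neg_ne_zero.mpr (hrne _ hx2))).mp hm
        have hle := hKcard {3, 4, 5} W2 (by intro i hi; fin_cases hi; exacts [h3, h4, h5])
        rw [hd2] at hle
        exact absurd hle (by decide)
    -- x 1 vanishes on W2
    have hW2c1 : ∀ x ∈ W2, x 1 = 0 := by
      intro x hx
      by_contra hx1
      have h5 : e 5 ∈ W2 := by
        have hFFx : F (F x) ∈ W2 := (hS2 _ (hS2 x hx).1).1
        rw [hFF x] at hFFx
        exact (Submodule.smul_mem_iff _ (pow_ne_zero _ (pow_ne_zero _ hx1))).mp hFFx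
      have h0 : e 0 ∈ W2 := by
        have hm : (x 1 ^ p) • e 0 ∈ W2 := by
          have he0 : (x 1 ^ p) • e 0 = F x - x 0 ^ p • e 5 := by
            rw [hF x, hW2c2 x hx]; simp [zero_pow hp.ne_zero]
          rw [he0]; exact sub_mem (hS2 x hx).1 (Submodule.smul_mem _ _ h5)
        exact (Submodule.smul_mem_iff _ (pow_ne_zero _ hx1)).mp hm
      have hEq : Kspace 𝔽 {0, 5} = W2 :=
        hKeq {0, 5} W2 (by intro i hi; fin_cases hi; exacts [h0, h5]) (by rw [hd2]; decide)
      rw [← hEq] at hx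
      exact hx1 ((mem_Kspace.mp hx) 1 (by decide))
    by_cases hcaseB : ∃ u ∈ W2, u 0 ≠ 0
    · -- Case B : leads to Y₂ or Z₁
      obtain ⟨u, huW, hu0⟩ := hcaseB
      have hu1 : u 1 = 0 := hW2c1 u huW
      have hu2 : u 2 = 0 := hW2c2 u huW
      have h5W2 : e 5 ∈ W2 := by
        have hFu : F u ∈ W2 := (hS2 u huW).1
        rw [hF u, hu1, hu2] at hFu
        simp only [zero_pow hp.ne_zero, zero_smul, zero_add, add_zero] at hFu
        exact (Submodule.smul_mem_iff _ (pow_ne_zero _ hu0)).mp hFu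
      have hW2c3 : ∀ x ∈ W2, x 3 = 0 := by
        intro v hv
        by_contra hv3
        have h4 : e 4 ∈ W2 := by
          have hVv : V v ∈ W2 := (hS2 v hv).2
          rw [hV v, hW2c1 v hv, hW2c2 v hv, hr0] at hVv
          simp only [neg_zero, zero_smul, zero_add, add_zero] at hVv
          exact (Submodule.smul_mem_iff _ (hrne _ hv3)).mp hVv
        have hEq : Kspace 𝔽 {4, 5} = W2 :=
          hKeq {4, 5} W2 (by intro i hi; fin_cases hi; exacts [h4, h5W2]) (by rw [hd2]; decide)
        rw [← hEq] at huW
        exact hu0 ((mem_Kspace.mp huW) 0 (by decide))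
      have hu3 : u 3 = 0 := hW2c3 u huW
      -- W1 = Kspace {5}
      have hW1c0 : ∀ x ∈ W1, x 0 = 0 := by
        intro x hx
        by_contra hx0
        have h5 : e 5 ∈ W1 := by
          have hFx : F x ∈ W1 := (hS1 x hx).1
          rw [hF x, hW2c1 x (hW12 hx), hW2c2 x (hW12 hx)] at hFx
          simp only [zero_pow hp.ne_zero, zero_smul, zero_add, add_zero] at hFx
          exact (Submodule.smul_mem_iff _ (pow_ne_zero _ hx0)).mp hFx
        have hEq : Kspace 𝔽 {5} = W1 :=
          hKeq {5} W1 (by intro i hi; fin_cases hi; exact h5) (by rw [hd1]; decide)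
        rw [← hEq] at hx
        exact hx0 ((mem_Kspace.mp hx) 0 (by decide))
      have hW1c4 : ∀ x ∈ W1, x 4 = 0 := by
        intro x hx
        by_contra hx4
        have h4 : e 4 ∈ W2 := by
          have heq4 : x - x 5 • e 5 = x 4 • e 4 := by
            funext j
            fin_cases j <;>
              simp [he, Pi.single_apply, hW1c0 x hx, hW2c1 x (hW12 hx), hW2c2 x (hW12 hx),
                hW2c3 x (hW12 hx)]
          have hm : x 4 • e 4 ∈ W2 := by
            rw [← heq4]; exact sub_mem (hW12 hx) (Submodule.smul_mem _ _ h5W2)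
          exact (Submodule.smul_mem_iff _ hx4).mp hm
        have hEq : Kspace 𝔽 {4, 5} = W2 :=
          hKeq {4, 5} W2 (by intro i hi; fin_cases hi; exacts [h4, h5W2]) (by rw [hd2]; decide)
        rw [← hEq] at huW
        exact hu0 ((mem_Kspace.mp huW) 0 (by decide))
      have hW1K : W1 = Kspace 𝔽 {5} := by
        refine hWeq {5} W1 ?_ (by rw [hd1]; decide)
        intro x hx j hj
        fin_cases j
        · exact hW1c0 x hx
        · exact hW2c1 x (hW12 hx)
        · exact hW2c2 x (hW12 hx)
        · exact hW2c3 x (hW12 hx)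
        · exact hW1c4 x hx
        · exact absurd (by decide) hj
      -- x 2 vanishes on W3
      have hW3c2 : ∀ x ∈ W3, x 2 = 0 := by
        intro x hx
        by_contra hx2
        have h4 : e 4 ∈ W3 := by
          have hVVx : V (V x) ∈ W3 := (hS3 _ (hS3 x hx).2).2
          rw [hVV x] at hVVx
          exact (Submodule.smul_mem_iff _ (hrne _ (neg_ne_zero.mpr (hrne _ hx2)))).mp hVVx
        have h5 : e 5 ∈ W3 := hW23 h5W2
        have h3 : e 3 ∈ W3 := by
          have hm : (-(r (x 2))) • e 3 ∈ W3 := by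
            have he3 : (-(r (x 2))) • e 3 = V x - r (x 3) • e 4 + r (x 1) • e 5 := by
              rw [hV x]; module
            rw [he3]
            exact add_mem (sub_mem (hS3 x hx).2 (Submodule.smul_mem _ _ h4))
              (Submodule.smul_mem _ _ h5)
          exact (Submodule.smul_mem_iff _ (neg_ne_zero.mpr (hrne _ hx2))).mp hm
        have hB3 := hiso u (hW23 huW) (e 3) h3
        rw [hB] at hB3
        simp [he, Pi.single_apply, hu1, hu2, hu3] at hB3
        exact hu0 hB3
      -- isotropy relation against u
      have hxu : ∀ x ∈ W3, x 3 * u 0 = x 1 * u 4 := by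
        intro x hx
        have hBu := hiso x hx u (hW23 huW)
        rw [hB, hu1, hu2, hu3, hW3c2 x hx] at hBu
        linear_combination -hBu
      by_cases hw1 : ∃ w ∈ W3, w 1 ≠ 0
      · -- Z₁
        obtain ⟨w, hwW, hw1'⟩ := hw1
        have h5W3 : e 5 ∈ W3 := hW23 h5W2
        have h0W3 : e 0 ∈ W3 := by
          have hm : (w 1 ^ p) • e 0 ∈ W3 := by
            have he0 : (w 1 ^ p) • e 0 = F w - w 0 ^ p • e 5 := by
              rw [hF w, hW3c2 w hwW]; simp [zero_pow hp.ne_zero]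
            rw [he0]; exact sub_mem (hS3 w hwW).1 (Submodule.smul_mem _ _ h5W3)
          exact (Submodule.smul_mem_iff _ (pow_ne_zero _ hw1')).mp hm
        have hW3c3 : ∀ x ∈ W3, x 3 = 0 := by
          intro x hx
          have hB0 := hiso x hx (e 0) h0W3
          rw [hB] at hB0
          simp [he, Pi.single_apply] at hB0
          exact hB0
        have hu4 : u 4 = 0 := by
          have h := hxu w hwW
          rw [hW3c3 w hwW, zero_mul] at h
          exact (mul_eq_zero.mp h.symm).resolve_left hw1'
        have h0W2 : e 0 ∈ W2 := by
          have heq0 : u - u 5 • e 5 = u 0 • e 0 := by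
            funext j
            fin_cases j <;> simp [he, Pi.single_apply, hu1, hu2, hu3, hu4]
          have hm : u 0 • e 0 ∈ W2 := by
            rw [← heq0]; exact sub_mem huW (Submodule.smul_mem _ _ h5W2)
          exact (Submodule.smul_mem_iff _ hu0).mp hm
        have hW2K : W2 = Kspace 𝔽 {0, 5} :=
          (hKeq {0, 5} W2 (by intro i hi; fin_cases hi; exacts [h0W2, h5W2])
            (by rw [hd2]; decide)).symm
        have hW3le : W3 ≤ Kspace 𝔽 {0, 1, 4, 5} := by
          refine hWle _ _ ?_
          intro x hx j hj
          fin_cases j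
          · exact absurd (by decide) hj
          · exact absurd (by decide) hj
          · exact hW3c2 x hx
          · exact hW3c3 x hx
          · exact absurd (by decide) hj
          · exact absurd (by decide) hj
        exact Or.inr (Or.inr (Or.inr (Or.inl ⟨hW1K, hW2K, hW3le⟩)))
      · -- Y₂
        push_neg at hw1
        have hW3c3 : ∀ x ∈ W3, x 3 = 0 := by
          intro x hx
          have h := hxu x hx
          rw [hw1 x hx, zero_mul] at h
          exact (mul_eq_zero.mp h).resolve_right hu0
        have hW3K : W3 = Kspace 𝔽 {0, 4, 5} := by
          refine hWeq _ _ ?_ (by rw [hd3]; decide)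
          intro x hx j hj
          fin_cases j
          · exact absurd (by decide) hj
          · exact hw1 x hx
          · exact hW3c2 x hx
          · exact hW3c3 x hx
          · exact absurd (by decide) hj
          · exact absurd (by decide) hj
        exact Or.inr (Or.inr (Or.inl ⟨hW1K, hW3K⟩))
    · push_neg at hcaseB
      by_cases hcaseC : ∃ v ∈ W2, v 3 ≠ 0
      · -- Case C : leads to Y₁ or Z₂
        obtain ⟨v, hvW, hv3⟩ := hcaseC
        have hv0 : v 0 = 0 := hcaseB v hvW
        have hv1 : v 1 = 0 := hW2c1 v hvW
        have hv2 : v 2 = 0 := hW2c2 v hvW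
        have h4W2 : e 4 ∈ W2 := by
          have hVv : V v ∈ W2 := (hS2 v hvW).2
          rw [hV v, hv1, hv2, hr0] at hVv
          simp only [neg_zero, zero_smul, zero_add, add_zero] at hVv
          exact (Submodule.smul_mem_iff _ (hrne _ hv3)).mp hVv
        have hW1c3 : ∀ x ∈ W1, x 3 = 0 := by
          intro x hx
          by_contra hx3
          have h4 : e 4 ∈ W1 := by
            have hVx : V x ∈ W1 := (hS1 x hx).2
            rw [hV x, hW2c1 x (hW12 hx), hW2c2 x (hW12 hx), hr0] at hVx
            simp only [neg_zero, zero_smul, zero_add, add_zero] at hVx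
            exact (Submodule.smul_mem_iff _ (hrne _ hx3)).mp hVx
          have hEq : Kspace 𝔽 {4} = W1 :=
            hKeq {4} W1 (by intro i hi; fin_cases hi; exact h4) (by rw [hd1]; decide)
          rw [← hEq] at hx
          exact hx3 ((mem_Kspace.mp hx) 3 (by decide))
        have hW1c5 : ∀ x ∈ W1, x 5 = 0 := by
          intro x hx
          by_contra hx5
          have h5 : e 5 ∈ W2 := by
            have heq5 : x - x 4 • e 4 = x 5 • e 5 := by
              funext j
              fin_cases j <;>
                simp [he, Pi.single_apply, hcaseB x (hW12 hx), hW2c1 x (hW12 hx),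
                  hW2c2 x (hW12 hx), hW1c3 x hx]
            have hm : x 5 • e 5 ∈ W2 := by
              rw [← heq5]; exact sub_mem (hW12 hx) (Submodule.smul_mem _ _ h4W2)
            exact (Submodule.smul_mem_iff _ hx5).mp hm
          have hEq : Kspace 𝔽 {4, 5} = W2 :=
            hKeq {4, 5} W2 (by intro i hi; fin_cases hi; exacts [h4W2, h5]) (by rw [hd2]; decide)
          rw [← hEq] at hvW
          exact hv3 ((mem_Kspace.mp hvW) 3 (by decide))
        have hW1K : W1 = Kspace 𝔽 {4} := by
          refine hWeq {4} W1 ?_ (by rw [hd1]; decide)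
          intro x hx j hj
          fin_cases j
          · exact hcaseB x (hW12 hx)
          · exact hW2c1 x (hW12 hx)
          · exact hW2c2 x (hW12 hx)
          · exact hW1c3 x hx
          · exact absurd (by decide) hj
          · exact hW1c5 x hx
        have h4W3 : e 4 ∈ W3 := hW23 h4W2
        have hW3c1 : ∀ x ∈ W3, x 1 = 0 := by
          intro x hx
          have hB4 := hiso x hx (e 4) h4W3
          rw [hB] at hB4
          simp [he, Pi.single_apply] at hB4
          exact hB4
        have hxv : ∀ x ∈ W3, x 0 * v 3 + x 2 * v 5 = 0 := by
          intro x hx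
          have hBv := hiso x hx v (hW23 hvW)
          rw [hB, hv0, hv1, hv2, hW3c1 x hx] at hBv
          linear_combination hBv
        by_cases hw2 : ∃ w ∈ W3, w 2 ≠ 0
        · -- Z₂
          obtain ⟨w, hwW, hw2'⟩ := hw2
          have h3W3 : e 3 ∈ W3 := by
            have hm : (-(r (w 2))) • e 3 ∈ W3 := by
              have he3 : (-(r (w 2))) • e 3 = V w - r (w 3) • e 4 := by
                rw [hV w, hW3c1 w hwW, hr0]; module
              rw [he3]
              exact sub_mem (hS3 w hwW).2 (Submodule.smul_mem _ _ h4W3)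
            exact (Submodule.smul_mem_iff _ (neg_ne_zero.mpr (hrne _ hw2'))).mp hm
          have hW3c0 : ∀ x ∈ W3, x 0 = 0 := by
            intro x hx
            have hB3 := hiso x hx (e 3) h3W3
            rw [hB] at hB3
            simp [he, Pi.single_apply] at hB3
            exact hB3
          have hv5 : v 5 = 0 := by
            have h := hxv w hwW
            rw [hW3c0 w hwW, zero_mul, zero_add] at h
            exact (mul_eq_zero.mp h).resolve_left hw2'
          have h3W2 : e 3 ∈ W2 := by
            have heq3 : v - v 4 • e 4 = v 3 • e 3 := by
              funext j
              fin_cases j <;> simp [he, Pi.single_apply, hv0, hv1, hv2, hv5]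
            have hm : v 3 • e 3 ∈ W2 := by
              rw [← heq3]; exact sub_mem hvW (Submodule.smul_mem _ _ h4W2)
            exact (Submodule.smul_mem_iff _ hv3).mp hm
          have hW2K : W2 = Kspace 𝔽 {3, 4} :=
            (hKeq {3, 4} W2 (by intro i hi; fin_cases hi; exacts [h3W2, h4W2])
              (by rw [hd2]; decide)).symm
          have hW3le : W3 ≤ Kspace 𝔽 {2, 3, 4, 5} := by
            refine hWle _ _ ?_
            intro x hx j hj
            fin_cases j
            · exact hW3c0 x hx
            · exact hW3c1 x hx
            · exact absurd (by decide) hj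
            · exact absurd (by decide) hj
            · exact absurd (by decide) hj
            · exact absurd (by decide) hj
          exact Or.inr (Or.inr (Or.inr (Or.inr ⟨hW1K, hW2K, hW3le⟩)))
        · -- Y₁
          push_neg at hw2
          have hW3c0 : ∀ x ∈ W3, x 0 = 0 := by
            intro x hx
            have h := hxv x hx
            rw [hw2 x hx, zero_mul, add_zero] at h
            exact (mul_eq_zero.mp h).resolve_right hv3
          have hW3K : W3 = Kspace 𝔽 {3, 4, 5} := by
            refine hWeq _ _ ?_ (by rw [hd3]; decide)
            intro x hx j hj
            fin_cases j
            · exact hW3c0 x hx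
            · exact hW3c1 x hx
            · exact hw2 x hx
            · exact absurd (by decide) hj
            · exact absurd (by decide) hj
            · exact absurd (by decide) hj
          exact Or.inr (Or.inl ⟨hW1K, hW3K⟩)
      · -- Case A : X
        push_neg at hcaseC
        have hW2K : W2 = Kspace 𝔽 {4, 5} := by
          refine hWeq {4, 5} W2 ?_ (by rw [hd2]; decide)
          intro x hx j hj
          fin_cases j
          · exact hcaseB x hx
          · exact hW2c1 x hx
          · exact hW2c2 x hx
          · exact hcaseC x hx
          · exact absurd (by decide) hj
          · exact absurd (by decide) hj
        have h4W3 : e 4 ∈ W3 := hW23 (by rw [hW2K]; exact heK 4 {4, 5} (by decide))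
        have h5W3 : e 5 ∈ W3 := hW23 (by rw [hW2K]; exact heK 5 {4, 5} (by decide))
        have hW3c2 : ∀ x ∈ W3, x 2 = 0 := by
          intro x hx
          by_contra hx2
          have h3 : e 3 ∈ W3 := by
            have hm : (-(r (x 2))) • e 3 ∈ W3 := by
              have he3 : (-(r (x 2))) • e 3 = V x - r (x 3) • e 4 + r (x 1) • e 5 := by
                rw [hV x]; module
              rw [he3]
              exact add_mem (sub_mem (hS3 x hx).2 (Submodule.smul_mem _ _ h4W3))
                (Submodule.smul_mem _ _ h5W3)
            exact (Submodule.smul_mem_iff _ (neg_ne_zero.mpr (hrne _ hx2))).mp hm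
          have hEq : Kspace 𝔽 {3, 4, 5} = W3 :=
            hKeq {3, 4, 5} W3 (by intro i hi; fin_cases hi; exacts [h3, h4W3, h5W3])
              (by rw [hd3]; decide)
          rw [← hEq] at hx
          exact hx2 ((mem_Kspace.mp hx) 2 (by decide))
        have hW3c1 : ∀ x ∈ W3, x 1 = 0 := by
          intro x hx
          by_contra hx1
          have h0 : e 0 ∈ W3 := by
            have hm : (x 1 ^ p) • e 0 ∈ W3 := by
              have he0 : (x 1 ^ p) • e 0 = F x - x 0 ^ p • e 5 := by
                rw [hF x, hW3c2 x hx]; simp [zero_pow hp.ne_zero]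
              rw [he0]; exact sub_mem (hS3 x hx).1 (Submodule.smul_mem _ _ h5W3)
            exact (Submodule.smul_mem_iff _ (pow_ne_zero _ hx1)).mp hm
          have hEq : Kspace 𝔽 {0, 4, 5} = W3 :=
            hKeq {0, 4, 5} W3 (by intro i hi; fin_cases hi; exacts [h0, h4W3, h5W3])
              (by rw [hd3]; decide)
          rw [← hEq] at hx
          exact hx1 ((mem_Kspace.mp hx) 1 (by decide))
        have hW3le : W3 ≤ Kspace 𝔽 {0, 3, 4, 5} := by
          refine hWle _ _ ?_
          intro x hx j hj
          fin_cases j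
          · exact absurd (by decide) hj
          · exact hW3c1 x hx
          · exact hW3c2 x hx
          · exact absurd (by decide) hj
          · exact absurd (by decide) hj
          · exact absurd (by decide) hj
        exact Or.inl ⟨hW2K, hW3le⟩
  · rintro (⟨hW2K, hW3le⟩ | ⟨hW1K, hW3K⟩ | ⟨hW1K, hW3K⟩ | ⟨hW1K, hW2K, hW3le⟩ |
      ⟨hW1K, hW2K, hW3le⟩)
    · -- Case X
      have h4W3 : e 4 ∈ W3 := hW23 (hW2K ▸ heK 4 {4, 5} (by decide))
      have h5W3 : e 5 ∈ W3 := hW23 (hW2K ▸ heK 5 {4, 5} (by decide))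
      refine ⟨?_, ?_, ?_, ?_⟩
      · -- isotropy via determinant trick on coordinates (0, 3)
        intro x hx y hy
        have hcx := mem_Kspace.mp (hW3le hx)
        have hcy := mem_Kspace.mp (hW3le hy)
        rw [hB, hcx 1 (by decide), hcx 2 (by decide), hcy 1 (by decide), hcy 2 (by decide)]
        suffices hkey : x 0 * y 3 - x 3 * y 0 = 0 by linear_combination hkey
        by_contra hD
        obtain ⟨z, hzdef⟩ : ∃ z, z = (y 3 / (x 0 * y 3 - x 3 * y 0)) • x
            - (x 3 / (x 0 * y 3 - x 3 * y 0)) • y := ⟨_, rfl⟩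
        have hzW : z ∈ W3 := by
          rw [hzdef]
          exact sub_mem (Submodule.smul_mem _ _ hx) (Submodule.smul_mem _ _ hy)
        have hz0 : z 0 = 1 := by
          rw [hzdef]
          simp only [Pi.sub_apply, Pi.smul_apply, smul_eq_mul]
          field_simp
          exact div_self (by intro h; apply hD; linear_combination h)
        have hz1 : z 1 = 0 := by
          rw [hzdef]
          simp only [Pi.sub_apply, Pi.smul_apply, smul_eq_mul, hcx 1 (by decide), hcy 1 (by decide)]
          ring
        have hz2 : z 2 = 0 := by
          rw [hzdef]
          simp only [Pi.sub_apply, Pi.smul_apply, smul_eq_mul, hcx 2 (by decide), hcy 2 (by decide)]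
          ring
        have hz3 : z 3 = 0 := by
          rw [hzdef]
          simp only [Pi.sub_apply, Pi.smul_apply, smul_eq_mul]
          ring
        have h0 : e 0 ∈ W3 := by
          have heq : e 0 = z - z 4 • e 4 - z 5 • e 5 := by
            funext j
            fin_cases j <;> simp [he, Pi.single_apply, hz0, hz1, hz2, hz3]
          rw [heq]
          exact sub_mem (sub_mem hzW (Submodule.smul_mem _ _ h4W3))
            (Submodule.smul_mem _ _ h5W3)
        obtain ⟨z', hz'def⟩ : ∃ z', z' = (x 0 / (x 0 * y 3 - x 3 * y 0)) • y
            - (y 0 / (x 0 * y 3 - x 3 * y 0)) • x := ⟨_, rfl⟩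
        have hz'W : z' ∈ W3 := by
          rw [hz'def]
          exact sub_mem (Submodule.smul_mem _ _ hy) (Submodule.smul_mem _ _ hx)
        have hz'0 : z' 0 = 0 := by
          rw [hz'def]
          simp only [Pi.sub_apply, Pi.smul_apply, smul_eq_mul]
          ring
        have hz'1 : z' 1 = 0 := by
          rw [hz'def]
          simp only [Pi.sub_apply, Pi.smul_apply, smul_eq_mul, hcx 1 (by decide), hcy 1 (by decide)]
          ring
        have hz'2 : z' 2 = 0 := by
          rw [hz'def]
          simp only [Pi.sub_apply, Pi.smul_apply, smul_eq_mul, hcx 2 (by decide), hcy 2 (by decide)]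
          ring
        have hz'3 : z' 3 = 1 := by
          rw [hz'def]
          simp only [Pi.sub_apply, Pi.smul_apply, smul_eq_mul]
          field_simp
        have h3 : e 3 ∈ W3 := by
          have heq : e 3 = z' - z' 4 • e 4 - z' 5 • e 5 := by
            funext j
            fin_cases j <;> simp [he, Pi.single_apply, hz'0, hz'1, hz'2, hz'3]
          rw [heq]
          exact sub_mem (sub_mem hz'W (Submodule.smul_mem _ _ h4W3))
            (Submodule.smul_mem _ _ h5W3)
        have hcard := hKcard {0, 3, 4, 5} W3
          (by intro i hi; fin_cases hi; exacts [h0, h3, h4W3, h5W3])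
        rw [hd3] at hcard
        exact absurd hcard (by decide)
      · intro x hx
        have hc := mem_Kspace.mp (hW2K ▸ hW12 hx)
        have hFx : F x = 0 := by
          rw [hF x, hc 0 (by decide), hc 1 (by decide), hc 2 (by decide)]
          simp [zero_pow hp.ne_zero]
        have hVx : V x = 0 := by
          rw [hV x, hc 1 (by decide), hc 2 (by decide), hc 3 (by decide), hr0]
          simp
        exact ⟨by rw [hFx]; exact zero_mem W1, by rw [hVx]; exact zero_mem W1⟩
      · intro x hx
        have hc := mem_Kspace.mp (hW2K ▸ hx)
        have hFx : F x = 0 := by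
          rw [hF x, hc 0 (by decide), hc 1 (by decide), hc 2 (by decide)]
          simp [zero_pow hp.ne_zero]
        have hVx : V x = 0 := by
          rw [hV x, hc 1 (by decide), hc 2 (by decide), hc 3 (by decide), hr0]
          simp
        exact ⟨by rw [hFx]; exact zero_mem W2, by rw [hVx]; exact zero_mem W2⟩
      · intro x hx
        have hc := mem_Kspace.mp (hW3le hx)
        have hFx : F x = x 0 ^ p • e 5 := by
          rw [hF x, hc 1 (by decide), hc 2 (by decide)]
          simp [zero_pow hp.ne_zero]
        have hVx : V x = r (x 3) • e 4 := by
          rw [hV x, hc 1 (by decide), hc 2 (by decide), hr0]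
          simp
        exact ⟨by rw [hFx]; exact Submodule.smul_mem _ _ h5W3,
          by rw [hVx]; exact Submodule.smul_mem _ _ h4W3⟩
    · -- Case Y₁
      have h4W1 : e 4 ∈ W1 := hW1K ▸ heK 4 {4} (by decide)
      refine ⟨?_, ?_, ?_, ?_⟩
      · intro x hx y hy
        have hcx := mem_Kspace.mp (hW3K ▸ hx)
        have hcy := mem_Kspace.mp (hW3K ▸ hy)
        rw [hB, hcx 0 (by decide), hcx 1 (by decide), hcx 2 (by decide), hcy 0 (by decide),
          hcy 1 (by decide), hcy 2 (by decide)]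
        ring
      · intro x hx
        have hc := mem_Kspace.mp (hW1K ▸ hx)
        have hFx : F x = 0 := by
          rw [hF x, hc 0 (by decide), hc 1 (by decide), hc 2 (by decide)]
          simp [zero_pow hp.ne_zero]
        have hVx : V x = 0 := by
          rw [hV x, hc 1 (by decide), hc 2 (by decide), hc 3 (by decide), hr0]
          simp
        exact ⟨by rw [hFx]; exact zero_mem W1, by rw [hVx]; exact zero_mem W1⟩
      · intro x hx
        have hc := mem_Kspace.mp (hW3K ▸ hW23 hx)
        have hFx : F x = 0 := by
          rw [hF x, hc 0 (by decide), hc 1 (by decide), hc 2 (by decide)]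
          simp [zero_pow hp.ne_zero]
        have hVx : V x = r (x 3) • e 4 := by
          rw [hV x, hc 1 (by decide), hc 2 (by decide), hr0]
          simp
        exact ⟨by rw [hFx]; exact zero_mem W2,
          by rw [hVx]; exact Submodule.smul_mem _ _ (hW12 h4W1)⟩
      · intro x hx
        have hc := mem_Kspace.mp (hW3K ▸ hx)
        have hFx : F x = 0 := by
          rw [hF x, hc 0 (by decide), hc 1 (by decide), hc 2 (by decide)]
          simp [zero_pow hp.ne_zero]
        have hVx : V x = r (x 3) • e 4 := by
          rw [hV x, hc 1 (by decide), hc 2 (by decide), hr0]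
          simp
        exact ⟨by rw [hFx]; exact zero_mem W3,
          by rw [hVx]; exact Submodule.smul_mem _ _ (hW23 (hW12 h4W1))⟩
    · -- Case Y₂
      have h5W1 : e 5 ∈ W1 := hW1K ▸ heK 5 {5} (by decide)
      refine ⟨?_, ?_, ?_, ?_⟩
      · intro x hx y hy
        have hcx := mem_Kspace.mp (hW3K ▸ hx)
        have hcy := mem_Kspace.mp (hW3K ▸ hy)
        rw [hB, hcx 1 (by decide), hcx 2 (by decide), hcx 3 (by decide), hcy 1 (by decide),
          hcy 2 (by decide), hcy 3 (by decide)]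
        ring
      · intro x hx
        have hc := mem_Kspace.mp (hW1K ▸ hx)
        have hFx : F x = 0 := by
          rw [hF x, hc 0 (by decide), hc 1 (by decide), hc 2 (by decide)]
          simp [zero_pow hp.ne_zero]
        have hVx : V x = 0 := by
          rw [hV x, hc 1 (by decide), hc 2 (by decide), hc 3 (by decide), hr0]
          simp
        exact ⟨by rw [hFx]; exact zero_mem W1, by rw [hVx]; exact zero_mem W1⟩
      · intro x hx
        have hc := mem_Kspace.mp (hW3K ▸ hW23 hx)
        have hFx : F x = x 0 ^ p • e 5 := by
          rw [hF x, hc 1 (by decide), hc 2 (by decide)]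
          simp [zero_pow hp.ne_zero]
        have hVx : V x = 0 := by
          rw [hV x, hc 1 (by decide), hc 2 (by decide), hc 3 (by decide), hr0]
          simp
        exact ⟨by rw [hFx]; exact Submodule.smul_mem _ _ (hW12 h5W1),
          by rw [hVx]; exact zero_mem W2⟩
      · intro x hx
        have hc := mem_Kspace.mp (hW3K ▸ hx)
        have hFx : F x = x 0 ^ p • e 5 := by
          rw [hF x, hc 1 (by decide), hc 2 (by decide)]
          simp [zero_pow hp.ne_zero]
        have hVx : V x = 0 := by
          rw [hV x, hc 1 (by decide), hc 2 (by decide), hc 3 (by decide), hr0]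
          simp
        exact ⟨by rw [hFx]; exact Submodule.smul_mem _ _ (hW23 (hW12 h5W1)),
          by rw [hVx]; exact zero_mem W3⟩
    · -- Case Z₁
      have h5W1 : e 5 ∈ W1 := hW1K ▸ heK 5 {5} (by decide)
      have h0W2 : e 0 ∈ W2 := hW2K ▸ heK 0 {0, 5} (by decide)
      have h0W3 : e 0 ∈ W3 := hW23 h0W2
      have h5W3 : e 5 ∈ W3 := hW23 (hW12 h5W1)
      refine ⟨?_, ?_, ?_, ?_⟩
      · intro x hx y hy
        have hcx := mem_Kspace.mp (hW3le hx)
        have hcy := mem_Kspace.mp (hW3le hy)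
        rw [hB, hcx 2 (by decide), hcx 3 (by decide), hcy 2 (by decide), hcy 3 (by decide)]
        suffices hkey : x 1 * y 4 - x 4 * y 1 = 0 by linear_combination hkey
        by_contra hD
        obtain ⟨z, hzdef⟩ : ∃ z, z = (y 4 / (x 1 * y 4 - x 4 * y 1)) • x
            - (x 4 / (x 1 * y 4 - x 4 * y 1)) • y := ⟨_, rfl⟩
        have hzW : z ∈ W3 := by
          rw [hzdef]
          exact sub_mem (Submodule.smul_mem _ _ hx) (Submodule.smul_mem _ _ hy)
        have hz1 : z 1 = 1 := by
          rw [hzdef]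
          simp only [Pi.sub_apply, Pi.smul_apply, smul_eq_mul]
          field_simp
          exact div_self (by intro h; apply hD; linear_combination h)
        have hz2 : z 2 = 0 := by
          rw [hzdef]
          simp only [Pi.sub_apply, Pi.smul_apply, smul_eq_mul, hcx 2 (by decide), hcy 2 (by decide)]
          ring
        have hz3 : z 3 = 0 := by
          rw [hzdef]
          simp only [Pi.sub_apply, Pi.smul_apply, smul_eq_mul, hcx 3 (by decide), hcy 3 (by decide)]
          ring
        have hz4 : z 4 = 0 := by
          rw [hzdef]
          simp only [Pi.sub_apply, Pi.smul_apply, smul_eq_mul]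
          ring
        have h1 : e 1 ∈ W3 := by
          have heq : e 1 = z - z 0 • e 0 - z 5 • e 5 := by
            funext j
            fin_cases j <;> simp [he, Pi.single_apply, hz1, hz2, hz3, hz4]
          rw [heq]
          exact sub_mem (sub_mem hzW (Submodule.smul_mem _ _ h0W3))
            (Submodule.smul_mem _ _ h5W3)
        obtain ⟨z', hz'def⟩ : ∃ z', z' = (x 1 / (x 1 * y 4 - x 4 * y 1)) • y
            - (y 1 / (x 1 * y 4 - x 4 * y 1)) • x := ⟨_, rfl⟩
        have hz'W : z' ∈ W3 := by
          rw [hz'def]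
          exact sub_mem (Submodule.smul_mem _ _ hy) (Submodule.smul_mem _ _ hx)
        have hz'1 : z' 1 = 0 := by
          rw [hz'def]
          simp only [Pi.sub_apply, Pi.smul_apply, smul_eq_mul]
          ring
        have hz'2 : z' 2 = 0 := by
          rw [hz'def]
          simp only [Pi.sub_apply, Pi.smul_apply, smul_eq_mul, hcx 2 (by decide), hcy 2 (by decide)]
          ring
        have hz'3 : z' 3 = 0 := by
          rw [hz'def]
          simp only [Pi.sub_apply, Pi.smul_apply, smul_eq_mul, hcx 3 (by decide), hcy 3 (by decide)]
          ring
        have hz'4 : z' 4 = 1 := by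
          rw [hz'def]
          simp only [Pi.sub_apply, Pi.smul_apply, smul_eq_mul]
          field_simp
        have h4 : e 4 ∈ W3 := by
          have heq : e 4 = z' - z' 0 • e 0 - z' 5 • e 5 := by
            funext j
            fin_cases j <;> simp [he, Pi.single_apply, hz'1, hz'2, hz'3, hz'4]
          rw [heq]
          exact sub_mem (sub_mem hz'W (Submodule.smul_mem _ _ h0W3))
            (Submodule.smul_mem _ _ h5W3)
        have hcard := hKcard {0, 1, 4, 5} W3
          (by intro i hi; fin_cases hi; exacts [h0W3, h1, h4, h5W3])
        rw [hd3] at hcard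
        exact absurd hcard (by decide)
      · intro x hx
        have hc := mem_Kspace.mp (hW1K ▸ hx)
        have hFx : F x = 0 := by
          rw [hF x, hc 0 (by decide), hc 1 (by decide), hc 2 (by decide)]
          simp [zero_pow hp.ne_zero]
        have hVx : V x = 0 := by
          rw [hV x, hc 1 (by decide), hc 2 (by decide), hc 3 (by decide), hr0]
          simp
        exact ⟨by rw [hFx]; exact zero_mem W1, by rw [hVx]; exact zero_mem W1⟩
      · intro x hx
        have hc := mem_Kspace.mp (hW2K ▸ hx)
        have hFx : F x = x 0 ^ p • e 5 := by
          rw [hF x, hc 1 (by decide), hc 2 (by decide)]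
          simp [zero_pow hp.ne_zero]
        have hVx : V x = 0 := by
          rw [hV x, hc 1 (by decide), hc 2 (by decide), hc 3 (by decide), hr0]
          simp
        exact ⟨by rw [hFx]; exact Submodule.smul_mem _ _ (hW12 h5W1),
          by rw [hVx]; exact zero_mem W2⟩
      · intro x hx
        have hc := mem_Kspace.mp (hW3le hx)
        have hFx : F x = x 1 ^ p • e 0 + x 0 ^ p • e 5 := by
          rw [hF x, hc 2 (by decide)]
          simp [zero_pow hp.ne_zero]
        have hVx : V x = (-(r (x 1))) • e 5 := by
          rw [hV x, hc 2 (by decide), hc 3 (by decide), hr0]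
          simp
        refine ⟨?_, ?_⟩
        · rw [hFx]
          exact add_mem (Submodule.smul_mem _ _ h0W3) (Submodule.smul_mem _ _ h5W3)
        · rw [hVx]
          exact Submodule.smul_mem _ _ h5W3
    · -- Case Z₂
      have h4W1 : e 4 ∈ W1 := hW1K ▸ heK 4 {4} (by decide)
      have h3W2 : e 3 ∈ W2 := hW2K ▸ heK 3 {3, 4} (by decide)
      have h3W3 : e 3 ∈ W3 := hW23 h3W2
      have h4W3 : e 4 ∈ W3 := hW23 (hW12 h4W1)
      refine ⟨?_, ?_, ?_, ?_⟩
      · intro x hx y hy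
        have hcx := mem_Kspace.mp (hW3le hx)
        have hcy := mem_Kspace.mp (hW3le hy)
        rw [hB, hcx 0 (by decide), hcx 1 (by decide), hcy 0 (by decide), hcy 1 (by decide)]
        suffices hkey : x 2 * y 5 - x 5 * y 2 = 0 by linear_combination hkey
        by_contra hD
        obtain ⟨z, hzdef⟩ : ∃ z, z = (y 5 / (x 2 * y 5 - x 5 * y 2)) • x
            - (x 5 / (x 2 * y 5 - x 5 * y 2)) • y := ⟨_, rfl⟩
        have hzW : z ∈ W3 := by
          rw [hzdef]
          exact sub_mem (Submodule.smul_mem _ _ hx) (Submodule.smul_mem _ _ hy)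
        have hz0 : z 0 = 0 := by
          rw [hzdef]
          simp only [Pi.sub_apply, Pi.smul_apply, smul_eq_mul, hcx 0 (by decide), hcy 0 (by decide)]
          ring
        have hz1 : z 1 = 0 := by
          rw [hzdef]
          simp only [Pi.sub_apply, Pi.smul_apply, smul_eq_mul, hcx 1 (by decide), hcy 1 (by decide)]
          ring
        have hz2 : z 2 = 1 := by
          rw [hzdef]
          simp only [Pi.sub_apply, Pi.smul_apply, smul_eq_mul]
          field_simp
          exact div_self (by intro h; apply hD; linear_combination h)
        have hz5 : z 5 = 0 := by
          rw [hzdef]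
          simp only [Pi.sub_apply, Pi.smul_apply, smul_eq_mul]
          ring
        have h2 : e 2 ∈ W3 := by
          have heq : e 2 = z - z 3 • e 3 - z 4 • e 4 := by
            funext j
            fin_cases j <;> simp [he, Pi.single_apply, hz0, hz1, hz2, hz5]
          rw [heq]
          exact sub_mem (sub_mem hzW (Submodule.smul_mem _ _ h3W3))
            (Submodule.smul_mem _ _ h4W3)
        obtain ⟨z', hz'def⟩ : ∃ z', z' = (x 2 / (x 2 * y 5 - x 5 * y 2)) • y
            - (y 2 / (x 2 * y 5 - x 5 * y 2)) • x := ⟨_, rfl⟩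
        have hz'W : z' ∈ W3 := by
          rw [hz'def]
          exact sub_mem (Submodule.smul_mem _ _ hy) (Submodule.smul_mem _ _ hx)
        have hz'0 : z' 0 = 0 := by
          rw [hz'def]
          simp only [Pi.sub_apply, Pi.smul_apply, smul_eq_mul, hcx 0 (by decide), hcy 0 (by decide)]
          ring
        have hz'1 : z' 1 = 0 := by
          rw [hz'def]
          simp only [Pi.sub_apply, Pi.smul_apply, smul_eq_mul, hcx 1 (by decide), hcy 1 (by decide)]
          ring
        have hz'2 : z' 2 = 0 := by
          rw [hz'def]
          simp only [Pi.sub_apply, Pi.smul_apply, smul_eq_mul]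
          ring
        have hz'5 : z' 5 = 1 := by
          rw [hz'def]
          simp only [Pi.sub_apply, Pi.smul_apply, smul_eq_mul]
          field_simp
        have h5 : e 5 ∈ W3 := by
          have heq : e 5 = z' - z' 3 • e 3 - z' 4 • e 4 := by
            funext j
            fin_cases j <;> simp [he, Pi.single_apply, hz'0, hz'1, hz'2, hz'5]
          rw [heq]
          exact sub_mem (sub_mem hz'W (Submodule.smul_mem _ _ h3W3))
            (Submodule.smul_mem _ _ h4W3)
        have hcard := hKcard {2, 3, 4, 5} W3
          (by intro i hi; fin_cases hi; exacts [h2, h3W3, h4W3, h5])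
        rw [hd3] at hcard
        exact absurd hcard (by decide)
      · intro x hx
        have hc := mem_Kspace.mp (hW1K ▸ hx)
        have hFx : F x = 0 := by
          rw [hF x, hc 0 (by decide), hc 1 (by decide), hc 2 (by decide)]
          simp [zero_pow hp.ne_zero]
        have hVx : V x = 0 := by
          rw [hV x, hc 1 (by decide), hc 2 (by decide), hc 3 (by decide), hr0]
          simp
        exact ⟨by rw [hFx]; exact zero_mem W1, by rw [hVx]; exact zero_mem W1⟩
      · intro x hx
        have hc := mem_Kspace.mp (hW2K ▸ hx)
        have hFx : F x = 0 := by
          rw [hF x, hc 0 (by decide), hc 1 (by decide), hc 2 (by decide)]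
          simp [zero_pow hp.ne_zero]
        have hVx : V x = r (x 3) • e 4 := by
          rw [hV x, hc 1 (by decide), hc 2 (by decide), hr0]
          simp
        exact ⟨by rw [hFx]; exact zero_mem W2,
          by rw [hVx]; exact Submodule.smul_mem _ _ (hW12 h4W1)⟩
      · intro x hx
        have hc := mem_Kspace.mp (hW3le hx)
        have hFx : F x = x 2 ^ p • e 4 := by
          rw [hF x, hc 0 (by decide), hc 1 (by decide)]
          simp [zero_pow hp.ne_zero]
        have hVx : V x = (-(r (x 2))) • e 3 + r (x 3) • e 4 := by
          rw [hV x, hc 1 (by decide), hr0]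
          simp
        refine ⟨?_, ?_⟩
        · rw [hFx]
          exact Submodule.smul_mem _ _ h4W3
        · rw [hVx]
          exact add_mem (Submodule.smul_mem _ _ h3W3) (Submodule.smul_mem _ _ h4W3)
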